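/- Let (b_1,…,b_r) be a T-chain with Hirzebruch–Jung continued fraction dn²/(dna−1), where d ≥ 1 and 0 < a < n are coprime integers. Then every discrepancy vector (δ_1,…,δ_r) of (b_1,…,b_r) has the form δ_i = −1 + t_i/n where each t_i is an integer with 1 ≤ t_i ≤ n−1, and moreover t_1 + t_r = n (equivalently, δ_1 + δ_r = −1). -/

import Mathlib

/-- Hirzebruch–Jung continued fraction: `hjcf [b₁,…,b_r] = b₁ - 1/(b₂ - 1/(⋯ - 1/b_r))`.
(With the convention `hjcf [] = 0`, so that `hjcf [b] = b` since `1/0 = 0`.) -/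
def hjcf : List ℚ → ℚ
  | [] => 0
  | b :: l => b - 1 / hjcf l

/-- Hirzebruch–Jung continued fraction of a list of integers. -/
def hjcfZ (b : List ℤ) : ℚ := hjcf (b.map (fun x => (x : ℚ)))

/-- `δ` is a discrepancy vector for the chain `b`: it has the same length and satisfies the
adjunction equations `-bᵢ·δᵢ + δ_{i-1} + δ_{i+1} = bᵢ - 2` (0-indexed, with the convention that
the entries just outside the chain are 0). -/
def IsDiscrepancyVector (b : List ℤ) (δ : List ℚ) : Prop :=
  δ.length = b.length ∧
    ∀ i < b.length,
      -((b.getD i 0 : ℚ)) * δ.getD i 0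
          + (if i = 0 then 0 else δ.getD (i - 1) 0) + δ.getD (i + 1) 0
        = (b.getD i 0 : ℚ) - 2

/-- Auxiliary sequence of "continuants" of the HJ continued fraction. -/
def cq (l : List ℤ) : ℕ → ℤ
  | 0 => 0
  | 1 => 1
  | (j+2) => l.getD j 0 * cq l (j+1) - cq l j

lemma cq_zero (l : List ℤ) : cq l 0 = 0 := rfl
lemma cq_one (l : List ℤ) : cq l 1 = 1 := rfl
lemma cq_rec (l : List ℤ) (j : ℕ) : cq l (j+2) = l.getD j 0 * cq l (j+1) - cq l j := rfl

lemma getD_rev (l : List ℤ) (i : ℕ) (h : i < l.length) :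
    l.reverse.getD (l.length - 1 - i) 0 = l.getD i 0 := by
  rw [List.getD_eq_getElem _ _ (by rw [List.length_reverse]; omega), List.getD_eq_getElem _ _ h]
  rw [List.getElem_reverse]
  congr 1
  omega

lemma cq_append (l t : List ℤ) : ∀ j, j ≤ l.length + 1 → cq (l ++ t) j = cq l j := by
  intro j
  induction j using Nat.strong_induction_on with
  | _ j ih =>
    match j with
    | 0 => intro _; rfl
    | 1 => intro _; rfl
    | (j+2) =>
      intro hj
      rw [cq_rec, cq_rec, List.getD_append _ _ _ _ (by omega),
        ih (j+1) (by omega) (by omega), ih j (by omega) (by omega)]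

lemma cq_mono (l : List ℤ) (h2 : ∀ x ∈ l, 2 ≤ x) :
    ∀ j, j ≤ l.length → cq l j < cq l (j+1) ∧ (j : ℤ) ≤ cq l j := by
  intro j
  induction j with
  | zero => intro _; simp [cq_zero, cq_one]
  | succ j ih =>
    intro hj
    obtain ⟨h1, h0⟩ := ih (by omega)
    have hb : 2 ≤ l.getD j 0 := by
      have := h2 (l.getD j 0)
        (by rw [List.getD_eq_getElem _ _ (by omega)]; exact List.getElem_mem _)
      exact this
    constructor
    · rw [cq_rec]; nlinarith
    · push_cast; omega

lemma cq_coprime (l : List ℤ) : ∀ j, IsCoprime (cq l (j+1)) (cq l j) := by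
  intro j
  induction j with
  | zero => simpa [cq] using isCoprime_one_left
  | succ j ih =>
    rw [cq_rec]
    have : IsCoprime (-cq l j + cq l (j+1) * l.getD j 0) (cq l (j+1)) :=
      (ih.symm.neg_left).add_mul_left_left _
    convert this using 1; ring

lemma cq_rev_pos (l : List ℤ) (h2 : ∀ x ∈ l, 2 ≤ x) : 1 ≤ cq l.reverse (l.length + 1) := by
  have h2' : ∀ x ∈ l.reverse, 2 ≤ x := fun x hx => h2 x (List.mem_reverse.mp hx)
  have := cq_mono l.reverse h2' l.length (by simp)
  omega

lemma hjcf_eq (l : List ℤ) (h2 : ∀ x ∈ l, 2 ≤ x) :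
    hjcfZ l = (cq l.reverse (l.length + 1) : ℚ) / (cq l.reverse l.length : ℚ) := by
  induction l with
  | nil => simp [hjcfZ, hjcf, cq]
  | cons x l ih =>
    have h2l : ∀ y ∈ l, 2 ≤ y := fun y hy => h2 y (List.mem_cons_of_mem _ hy)
    set s := l.length with hs
    have hN : 1 ≤ cq l.reverse (s + 1) := cq_rev_pos l h2l
    have hNQ : ((cq l.reverse (s+1) : ℤ) : ℚ) ≠ 0 := by
      exact_mod_cast (by omega : (cq l.reverse (s+1) : ℤ) ≠ 0)
    have hrev : (x :: l).reverse = l.reverse ++ [x] := by simp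
    have hlen : (x :: l).length = s + 1 := by simp [hs]
    have e1 : cq ((x :: l).reverse) (s+2) = x * cq l.reverse (s+1) - cq l.reverse s := by
      rw [hrev, cq_rec, cq_append _ _ (s+1) (by simp [hs]), cq_append _ _ s (by simp [hs])]
      congr 2
      rw [List.getD_append_right _ _ _ _ (by simp [hs])]
      simp [hs]
    have e2 : cq ((x :: l).reverse) (s+1) = cq l.reverse (s+1) := by
      rw [hrev]; exact cq_append _ _ (s+1) (by simp [hs])
    have : hjcfZ (x :: l) = (x : ℚ) - 1 / hjcfZ l := rfl
    rw [this, ih h2l, one_div_div, hlen, e1, e2]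
    push_cast
    rw [sub_div, mul_div_cancel_right₀ _ hNQ]

lemma cas (l : List ℤ) : ∀ i, i ≤ l.length →
    cq l (i+1) * cq l.reverse (l.length + 1 - i) - cq l i * cq l.reverse (l.length - i)
      = cq l.reverse (l.length + 1) := by
  intro i
  induction i with
  | zero => intro _; simp [cq]
  | succ i ih =>
    intro hi
    have ih := ih (by omega)
    set L := l.length with hL
    set k := L - 1 - i with hk
    have hk1 : L - i = k + 1 := by omega
    have hk2 : L + 1 - i = k + 2 := by omega
    have hk3 : L - (i+1) = k := by omega
    have hk4 : L + 1 - (i+1) = k + 1 := by omega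
    rw [hk1, hk2] at ih
    rw [hk3, hk4, cq_rec l i]
    rw [cq_rec l.reverse k] at ih
    have hg : l.reverse.getD k 0 = l.getD i 0 := by
      rw [hk]; exact getD_rev l i (by omega)
    rw [hg] at ih
    linear_combination ih

lemma m_rev (l : List ℤ) : cq l (l.length + 1) = cq l.reverse (l.length + 1) := by
  have := cas l l.length le_rfl
  simpa [cq] using this

/-- Second auxiliary solution of the three-term recurrence. -/
def cA (l : List ℤ) : ℕ → ℤ
  | 0 => 1
  | (j+1) => - cq l.tail j

lemma getD_tail (l : List ℤ) (j : ℕ) : l.tail.getD j 0 = l.getD (j+1) 0 := by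
  cases l <;> simp [List.getD]

lemma cA_rec (l : List ℤ) : ∀ j, cA l (j+2) = l.getD j 0 * cA l (j+1) - cA l j := by
  intro j
  match j with
  | 0 => simp [cA, cq]
  | (j+1) =>
    show - cq l.tail (j+2) = l.getD (j+1) 0 * (- cq l.tail (j+1)) - (- cq l.tail j)
    rw [cq_rec, getD_tail]
    ring

lemma cas2 (l : List ℤ) : ∀ i, cq l (i+1) * cA l i - cq l i * cA l (i+1) = 1 := by
  intro i
  induction i with
  | zero => simp [cq, cA]
  | succ i ih =>
    rw [cq_rec, cA_rec]
    linear_combination ih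

set_option maxHeartbeats 1000000 in
theorem stmt4 (d n a : ℤ) (hd : 1 ≤ d) (ha : 0 < a) (han : a < n)
    (hgcd : Int.gcd a n = 1)
    (b : List ℤ) (h2 : ∀ x ∈ b, 2 ≤ x)
    (hcf : hjcfZ b = ((d * n ^ 2 : ℤ) : ℚ) / ((d * n * a - 1 : ℤ) : ℚ))
    (δ : List ℚ) (hδ : IsDiscrepancyVector b δ) :
    ∃ t : List ℤ, t.length = b.length ∧
      (∀ i < t.length,
        δ.getD i 0 = -1 + (t.getD i 0 : ℚ) / (n : ℚ) ∧
          1 ≤ t.getD i 0 ∧ t.getD i 0 ≤ n - 1) ∧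
      t.getD 0 0 + t.getD (t.length - 1) 0 = n := by
  have hn2 : 2 ≤ n := by omega
  have hdn2 : 2 ≤ d * n := by nlinarith
  have hK1 : 1 ≤ d * n * a - 1 := by nlinarith
  have hM4 : 4 ≤ d * n ^ 2 := by nlinarith
  have hKQ : ((d * n * a - 1 : ℤ) : ℚ) ≠ 0 :=
    Int.cast_ne_zero.mpr (ne_of_gt (by linarith))
  have hMQ : ((d * n ^ 2 : ℤ) : ℚ) ≠ 0 :=
    Int.cast_ne_zero.mpr (ne_of_gt (by linarith))
  set r := b.length with hr
  -- r ≥ 1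
  have hr1 : 1 ≤ r := by
    by_contra h
    have hb0 : b = [] := List.length_eq_zero_iff.mp (by omega)
    rw [hb0] at hcf
    have h0 : hjcfZ [] = 0 := rfl
    rw [h0] at hcf
    exact (div_ne_zero hMQ hKQ) hcf.symm
  have h2' : ∀ x ∈ b.reverse, 2 ≤ x := fun x hx => h2 x (List.mem_reverse.mp hx)
  have hmonoF := cq_mono b h2
  have hmonoR := cq_mono b.reverse h2'
  have hlenR : b.reverse.length = r := by simp [hr]
  -- identify numerator and denominator
  have hKpos : (1 : ℤ) ≤ cq b.reverse r := by
    have := hmonoR r (by omega)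
    omega
  have hMpos : (1 : ℤ) ≤ cq b.reverse (r+1) := by
    have := hmonoR r (by omega)
    omega
  have hfrac : (cq b.reverse (r+1) : ℚ) / (cq b.reverse r : ℚ)
      = ((d * n ^ 2 : ℤ) : ℚ) / ((d * n * a - 1 : ℤ) : ℚ) := by
    have h := hjcf_eq b h2
    rw [← hr] at h
    rw [← h]
    exact hcf
  have hcross : cq b.reverse (r+1) * (d * n * a - 1) = d * n ^ 2 * cq b.reverse r := by
    have hKQ' : ((cq b.reverse r : ℤ) : ℚ) ≠ 0 :=
      Int.cast_ne_zero.mpr (ne_of_gt (by omega))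
    have := (div_eq_div_iff hKQ' hKQ).mp hfrac
    exact_mod_cast this
  have hcop1 : IsCoprime (cq b.reverse (r+1)) (cq b.reverse r) := cq_coprime b.reverse r
  have hcop2 : IsCoprime (d * n ^ 2) (d * n * a - 1) := by
    have h1 : IsCoprime (d * n * a) (d * n * a - 1) := ⟨1, -1, by ring⟩
    have h2p : IsCoprime ((d * n * a)^2) (d * n * a - 1) := h1.pow_left
    exact h2p.of_isCoprime_of_dvd_left ⟨d * a ^ 2, by ring⟩
  have hM : cq b.reverse (r+1) = d * n ^ 2 := by
    refine Int.dvd_antisymm (by omega) (by linarith) ?_ ?_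
    · exact hcop1.dvd_of_dvd_mul_right ⟨d * n * a - 1, hcross.symm⟩
    · exact hcop2.dvd_of_dvd_mul_right ⟨cq b.reverse r, hcross⟩
  have hK : cq b.reverse r = d * n * a - 1 := by
    have h1 : (d * n ^ 2) * (d * n * a - 1) = (d * n ^ 2) * cq b.reverse r := by
      linear_combination hcross - (d * n * a - 1) * hM
    have h2c := mul_left_cancel₀ (ne_of_gt (by linarith : (0:ℤ) < d * n ^ 2)) h1
    exact h2c.symm
  have hMq : cq b (r+1) = d * n ^ 2 := by
    have h := m_rev b
    rw [← hr] at h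
    rw [h]; exact hM
  -- the congruence lemma
  have htail : cq b.tail r = d * n * a - 1 := by
    cases b with
    | nil => simp [hr] at hr1
    | cons x l =>
      have hrl : r = l.length + 1 := by rw [hr]; rfl
      have e1 : cq (x :: l).tail r = cq l r := rfl
      have e2 : cq l r = cq l.reverse r := by
        rw [hrl]; exact m_rev l
      have e3 : cq (x :: l).reverse r = cq l.reverse r := by
        rw [show (x :: l).reverse = l.reverse ++ [x] by simp]
        exact cq_append _ _ r (by simp [hrl])
      rw [e1, e2, ← e3, hK]
  have W : ∀ i, i ≤ r + 1 →
      (d * n ^ 2 : ℤ) ∣ cq b.reverse i - (d * n * a - 1) * cq b (r + 1 - i) := by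
    intro i
    induction i using Nat.strong_induction_on with
    | _ i ih =>
      match i with
      | 0 =>
        intro _
        refine ⟨-(d * n * a - 1), ?_⟩
        rw [Nat.sub_zero, hMq, cq_zero]
        ring
      | 1 =>
        intro _
        have hc := cas2 b r
        have hA : cA b (r+1) = - cq b.tail r := rfl
        rw [hA, htail, hMq] at hc
        refine ⟨cA b r, ?_⟩
        rw [cq_one, Nat.add_sub_cancel]
        linarith [hc]
      | (i+2) =>
        intro h
        obtain ⟨u, hu⟩ := ih (i+1) (by omega) (by omega)
        obtain ⟨v, hv⟩ := ih i (by omega) (by omega)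
        set j := r - 1 - i with hj
        have e1 : r + 1 - (i+2) = j := by omega
        have e2 : r + 1 - (i+1) = j + 1 := by omega
        have e3 : r + 1 - i = j + 2 := by omega
        rw [e1]
        rw [e2] at hu
        rw [e3] at hv
        have hg : b.reverse.getD i 0 = b.getD j 0 := by
          have hgr := getD_rev b j (by omega)
          rw [show b.length - 1 - j = i by omega] at hgr
          rw [hgr]
        refine ⟨b.getD j 0 * u - v, ?_⟩
        rw [cq_rec b.reverse i, hg]
        linear_combination (b.getD j 0) * hu - hv - (d * n * a - 1) * (cq_rec b j)
  -- the combined sequence S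
  set Sf : ℕ → ℤ := fun j => cq b j + cq b.reverse (r + 1 - j) with hSf
  have hS0 : Sf 0 = d * n ^ 2 := by
    simp only [hSf, Nat.sub_zero, cq_zero, hM]
    ring
  have hSr1 : Sf (r+1) = d * n ^ 2 := by
    simp only [hSf, Nat.sub_self, cq_zero, hMq]
    ring
  have hb2 : ∀ j < r, 2 ≤ b.getD j 0 := by
    intro j hj
    exact h2 _ (by rw [List.getD_eq_getElem _ _ (by omega)]; exact List.getElem_mem _)
  have hSrec : ∀ j < r, Sf (j+2) = b.getD j 0 * Sf (j+1) - Sf j := by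
    intro j hj
    set k := r - 1 - j with hk
    have e1 : r + 1 - (j+2) = k := by omega
    have e2 : r + 1 - (j+1) = k + 1 := by omega
    have e3 : r + 1 - j = k + 2 := by omega
    have hg : b.reverse.getD k 0 = b.getD j 0 := by
      have hgr := getD_rev b j (by omega)
      rw [show b.length - 1 - j = k by omega] at hgr
      rw [hgr]
    simp only [hSf, e1, e2, e3]
    rw [cq_rec b j, cq_rec b.reverse k, hg]
    ring
  have hSle : ∀ j, 1 ≤ j → j ≤ r → Sf j ≤ d * n ^ 2 := by
    intro j hj1 hjr
    have hcas := cas b j (by omega)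
    rw [← hr] at hcas
    rw [hM] at hcas
    have m1 := hmonoF j (by omega)
    have m2 := hmonoR (r - j) (by omega)
    rw [show r - j + 1 = r + 1 - j by omega] at m2
    have hq1 : (1 : ℤ) ≤ cq b j := by
      have : (1 : ℤ) ≤ (j : ℤ) := by exact_mod_cast hj1
      linarith [m1.2]
    have hp0 : (0 : ℤ) ≤ cq b.reverse (r - j) := by
      have : (0 : ℤ) ≤ ((r - j : ℕ) : ℤ) := Int.ofNat_nonneg _
      linarith [m2.2]
    simp only [hSf]
    nlinarith [m1.1, m2.1, hq1, hp0, hcas,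
      mul_nonneg (by linarith [m1.1] : (0:ℤ) ≤ cq b (j+1) - cq b j - 1)
        (by linarith [m2.1, hp0] : (0:ℤ) ≤ cq b.reverse (r + 1 - j)),
      mul_nonneg (by linarith : (0:ℤ) ≤ cq b j)
        (by linarith [m2.1] : (0:ℤ) ≤ cq b.reverse (r + 1 - j) - cq b.reverse (r - j) - 1)]
  -- discrepancy side
  obtain ⟨hlen, hadj⟩ := hδ
  set E : ℕ → ℚ := fun j => if j = 0 then 1 else δ.getD (j-1) 0 + 1 with hE
  have hE0 : E 0 = 1 := rfl
  have hEsucc : ∀ j, E (j+1) = δ.getD j 0 + 1 := by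
    intro j; simp [hE]
  have hEr : E (r+1) = 1 := by
    rw [hEsucc, List.getD_eq_default _ _ (by omega)]
    norm_num
  have hErec : ∀ j < r, E (j+2) = (b.getD j 0 : ℚ) * E (j+1) - E j := by
    intro j hj
    have h := hadj j (by omega)
    have e2 : E (j+2) = δ.getD (j+1) 0 + 1 := hEsucc (j+1)
    have e1 : E (j+1) = δ.getD j 0 + 1 := hEsucc j
    rw [e2, e1]
    cases j with
    | zero =>
      rw [if_pos rfl] at h
      rw [hE0]
      linear_combination h
    | succ k =>
      rw [if_neg (by omega)] at h
      rw [hEsucc k]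
      simp only [Nat.add_sub_cancel] at h
      linear_combination h
  set c : ℚ := E 1 - (Sf 1 : ℚ) / ((d * n ^ 2 : ℤ) : ℚ) with hc
  have key : ∀ j, j ≤ r →
      (E j - (Sf j : ℚ) / ((d * n ^ 2 : ℤ) : ℚ) = c * (cq b j : ℚ)) ∧
      (E (j+1) - (Sf (j+1) : ℚ) / ((d * n ^ 2 : ℤ) : ℚ) = c * (cq b (j+1) : ℚ)) := by
    intro j
    induction j with
    | zero =>
      intro _
      constructor
      · rw [hE0, hS0, cq_zero, div_self hMQ]
        push_cast
        ring
      · show E 1 - (Sf 1 : ℚ) / ((d * n ^ 2 : ℤ) : ℚ) = c * (cq b 1 : ℚ)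
        rw [cq_one, hc]
        push_cast
        ring
    | succ j ih =>
      intro hj
      obtain ⟨ih1, ih2⟩ := ih (by omega)
      refine ⟨ih2, ?_⟩
      show E (j+2) - (Sf (j+2) : ℚ) / ((d * n ^ 2 : ℤ) : ℚ) = c * (cq b (j+2) : ℚ)
      rw [hErec j (by omega), hSrec j (by omega), cq_rec b j]
      push_cast at ih1 ih2 ⊢
      linear_combination (b.getD j 0 : ℚ) * ih2 - ih1
  have hc0 : c = 0 := by
    have hk := (key r le_rfl).2
    rw [hEr, hSr1, hMq, div_self hMQ] at hk
    have h0 : c * ((d * n ^ 2 : ℤ) : ℚ) = 0 := by linarith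
    exact (mul_eq_zero.mp h0).resolve_right hMQ
  have Efin : ∀ j, j ≤ r → E j = (Sf j : ℚ) / ((d * n ^ 2 : ℤ) : ℚ) := by
    intro j hj
    have h := (key j hj).1
    rw [hc0, zero_mul] at h
    linarith
  -- construct t
  refine ⟨(List.range r).map (fun i => (cq b (i+1) + cq b.reverse (r - i)) / (d * n)), ?_, ?_, ?_⟩
  · rw [List.length_map, List.length_range, hr]
  · intro i hi
    rw [List.length_map, List.length_range] at hi
    have hgetD : ((List.range r).map
        (fun i => (cq b (i+1) + cq b.reverse (r - i)) / (d * n))).getD i 0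
        = (cq b (i+1) + cq b.reverse (r - i)) / (d * n) := by
      rw [List.getD_eq_getElem _ _ (by simpa using hi)]
      simp
    rw [hgetD]
    have hSval : Sf (i+1) = cq b (i+1) + cq b.reverse (r - i) := by
      simp only [hSf]
      congr 2
      omega
    have hWdvd := W (r - i) (by omega)
    rw [show r + 1 - (r - i) = i + 1 by omega] at hWdvd
    obtain ⟨w, hw⟩ := hWdvd
    have hdvd : (d * n) ∣ Sf (i+1) := by
      refine ⟨n * w + a * cq b (i+1), ?_⟩
      rw [hSval]
      linear_combination hw
    have hSpos : 1 ≤ Sf (i+1) := by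
      have m1 := hmonoF i (by omega)
      have m2 := hmonoR (r - 1 - i) (by omega)
      rw [show r - 1 - i + 1 = r - i by omega] at m2
      have h1 : (0 : ℤ) ≤ ((i : ℕ) : ℤ) := Int.ofNat_nonneg _
      have h2q : (0 : ℤ) ≤ ((r - 1 - i : ℕ) : ℤ) := Int.ofNat_nonneg _
      rw [hSval]
      have := m1.2
      have := m2.2
      omega
    have hSle' : Sf (i+1) ≤ d * n ^ 2 := hSle (i+1) (by omega) (by omega)
    have hSne : Sf (i+1) ≠ d * n ^ 2 := by
      intro hSm
      have prop : ∀ j, i + 1 ≤ j → j ≤ r → Sf j = d * n ^ 2 := by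
        intro j hj1
        induction j, hj1 using Nat.le_induction with
        | base => intro _; exact hSm
        | succ j hj ihj =>
          intro hjr
          have hSj := ihj (by omega)
          have hrec := hSrec (j-1) (by omega)
          rw [show j - 1 + 2 = j + 1 by omega, show j - 1 + 1 = j by omega] at hrec
          have hbj := hb2 (j-1) (by omega)
          have hprev : Sf (j-1) ≤ d * n ^ 2 := by
            rcases Nat.eq_zero_or_pos (j-1) with h0 | h0
            · rw [h0]; exact le_of_eq hS0
            · exact hSle (j-1) (by omega) (by omega)
          have hup : Sf (j+1) ≤ d * n ^ 2 := hSle (j+1) (by omega) (by omega)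
          have hlow : d * n ^ 2 ≤ Sf (j+1) := by nlinarith [hrec, hSj, hprev, hbj]
          linarith
      have hSr : Sf r = d * n ^ 2 := prop r (by omega) le_rfl
      have hSrval : Sf r = cq b r + 1 := by
        simp only [hSf]
        rw [show r + 1 - r = 1 by omega, cq_one]
      have hW1 := W 1 (by omega)
      rw [Nat.add_sub_cancel, cq_one] at hW1
      have hqr : cq b r = d * n ^ 2 - 1 := by linarith [hSr, hSrval]
      rw [hqr] at hW1
      obtain ⟨u, hu⟩ := hW1
      have hdna : d * n * a = d * n ^ 2 * (u - 1 + d * n * a) := by linear_combination hu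
      have hcancel : a = n * (u - 1 + d * n * a) := by
        have h' : (d * n) * a = (d * n) * (n * (u - 1 + d * n * a)) := by
          linear_combination hdna
        exact mul_left_cancel₀ (by linarith : (d * n : ℤ) ≠ 0) h'
      rcases le_or_gt (u - 1 + d * n * a) 0 with hw0 | hw0
      · nlinarith
      · nlinarith
    obtain ⟨u, hu⟩ := hdvd
    have hune : (d * n : ℤ) ≠ 0 := by linarith
    have hudiv : (cq b (i+1) + cq b.reverse (r - i)) / (d * n) = u := by
      rw [← hSval, hu]
      exact Int.mul_ediv_cancel_left u hune
    rw [hudiv]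
    have hu1 : 1 ≤ u := by nlinarith [hu, hSpos, hdn2]
    have hun : u ≤ n - 1 := by
      have hlt : Sf (i+1) < d * n ^ 2 := lt_of_le_of_ne hSle' hSne
      rw [hu] at hlt
      have h1 : d * n * u < d * n * n := by nlinarith
      have := lt_of_mul_lt_mul_left h1 (by linarith : (0:ℤ) ≤ d * n)
      omega
    refine ⟨?_, hu1, hun⟩
    have hdel : δ.getD i 0 = E (i+1) - 1 := by rw [hEsucc]; ring
    have hcast : ((Sf (i+1) : ℤ) : ℚ) / ((d * n ^ 2 : ℤ) : ℚ) = (u : ℚ) / (n : ℚ) := by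
      rw [hu, show (d * n ^ 2 : ℤ) = (d*n) * n by ring, show (d * n * u : ℤ) = (d*n) * u by ring]
      push_cast
      rw [mul_div_mul_left _ _ (by exact_mod_cast hune : ((d : ℚ) * n) ≠ 0)]
    rw [hdel, Efin (i+1) (by omega), hcast]
    ring
  · rw [List.length_map, List.length_range]
    have hget : ∀ i, i < r → ((List.range r).map
        (fun i => (cq b (i+1) + cq b.reverse (r - i)) / (d * n))).getD i 0
        = (cq b (i+1) + cq b.reverse (r - i)) / (d * n) := by
      intro i hi
      rw [List.getD_eq_getElem _ _ (by simpa using hi)]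
      simp
    rw [hget 0 (by omega), hget (r-1) (by omega)]
    have hune : (d * n : ℤ) ≠ 0 := by linarith
    have e0 : (cq b (0+1) + cq b.reverse (r - 0)) / (d * n) = a := by
      show (cq b 1 + cq b.reverse (r - 0)) / (d * n) = a
      rw [cq_one, Nat.sub_zero, hK, show (1 + (d * n * a - 1)) = (d * n) * a by ring]
      exact Int.mul_ediv_cancel_left a hune
    -- value of cq b r
    have hW1 := W 1 (by omega)
    rw [Nat.add_sub_cancel, cq_one] at hW1
    have hXdvd : (d * n ^ 2 : ℤ) ∣ 1 - (d * n * a - 1) * (d * n ^ 2 - d * n * a - 1) :=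
      ⟨d * a ^ 2 + 1 - d * n * a, by ring⟩
    have hdiff : (d * n ^ 2 : ℤ) ∣ (d * n * a - 1) * (cq b r - (d * n ^ 2 - d * n * a - 1)) := by
      have hsub := dvd_sub hXdvd hW1
      rw [show (d * n * a - 1) * (cq b r - (d * n ^ 2 - d * n * a - 1)) = (1 - (d * n * a - 1) * (d * n ^ 2 - d * n * a - 1)) - (1 - (d * n * a - 1) * cq b r) by ring]
      exact hsub
    have hdvdr : (d * n ^ 2 : ℤ) ∣ cq b r - (d * n ^ 2 - d * n * a - 1) :=
      hcop2.dvd_of_dvd_mul_left hdiff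
    have hqrb1 : 1 ≤ cq b r := by
      have m1 := hmonoF r (by omega)
      have : (1 : ℤ) ≤ (r : ℤ) := by exact_mod_cast hr1
      linarith [m1.2]
    have hqrb2 : cq b r ≤ d * n ^ 2 - 1 := by
      have m1 := hmonoF r (by omega)
      linarith [m1.1, hMq]
    have hXb : 1 ≤ d * n ^ 2 - d * n * a - 1 := by nlinarith
    have hXb2 : d * n ^ 2 - d * n * a - 1 ≤ d * n ^ 2 - 1 := by nlinarith
    have hqr : cq b r = d * n ^ 2 - d * n * a - 1 := by
      have h0 := Int.eq_zero_of_abs_lt_dvd hdvdr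
        (abs_lt.mpr ⟨by linarith, by linarith⟩)
      linarith
    have e1 : (cq b (r - 1 + 1) + cq b.reverse (r - (r-1))) / (d * n) = n - a := by
      rw [show r - 1 + 1 = r by omega, show r - (r-1) = 1 by omega, cq_one, hqr,
        show (d * n ^ 2 - d * n * a - 1 + 1) = (d * n) * (n - a) by ring]
      exact Int.mul_ediv_cancel_left (n - a) hune
    rw [e0, e1]
    ring
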